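/- If the rows of a square real matrix B sum to the zero vector and the columns of B also sum to the zero vector, then the matrix B̃ obtained by deleting the first row and first column of B satisfies rank(B̃) = rank(B). -/

import Mathlib

open Submodule Matrix

/-- Deleting a column that is (minus) the sum of the others does not change rank. -/
lemma rank_drop_first_col (m n : ℕ) (A : Matrix (Fin m) (Fin (n + 1)) ℝ)
    (h : ∀ i, ∑ j, A i j = 0) :
    (A.submatrix id Fin.succ).rank = A.rank := by
  rw [Matrix.rank_eq_finrank_span_cols, Matrix.rank_eq_finrank_span_cols]
  have key : span ℝ (Set.range (A.submatrix id Fin.succ)ᵀ) = span ℝ (Set.range Aᵀ) := by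
    apply le_antisymm
    · apply span_mono
      rintro _ ⟨j, rfl⟩
      exact ⟨Fin.succ j, rfl⟩
    · rw [span_le]
      rintro _ ⟨j, rfl⟩
      rcases Fin.eq_zero_or_eq_succ j with rfl | ⟨k, rfl⟩
      · have hA0 : Aᵀ 0 = -∑ k : Fin n, Aᵀ (Fin.succ k) := by
          funext i
          have h2 := h i
          rw [Fin.sum_univ_succ] at h2
          simp only [Matrix.transpose_apply, Pi.neg_apply, Finset.sum_apply]
          linarith
        rw [SetLike.mem_coe, hA0]
        exact neg_mem (sum_mem fun k _ => subset_span ⟨k, rfl⟩)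
      · exact subset_span ⟨k, rfl⟩
  change Module.finrank ℝ (span ℝ (Set.range (A.submatrix id Fin.succ)ᵀ)) = Module.finrank ℝ (span ℝ (Set.range Aᵀ))
  rw [key]

/-- If the rows of a square real matrix sum to zero and the columns sum to
zero, then deleting the first row and first column does not change the rank. -/
theorem rank_delete_first_row_col (n : ℕ) (B : Matrix (Fin (n + 1)) (Fin (n + 1)) ℝ)
    (hrows : ∀ j, ∑ i, B i j = 0) (hcols : ∀ i, ∑ j, B i j = 0) :
    (B.submatrix Fin.succ Fin.succ).rank = B.rank := by
  have h1 : (B.submatrix Fin.succ Fin.succ) = (B.submatrix Fin.succ id).submatrix id Fin.succ := rfl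
  rw [h1, rank_drop_first_col _ _ (B.submatrix Fin.succ id) (fun i => hcols (Fin.succ i))]
  have h2 : B.submatrix Fin.succ id = ((Bᵀ).submatrix id Fin.succ)ᵀ := rfl
  rw [h2, Matrix.rank_transpose, rank_drop_first_col _ _ Bᵀ (fun i => hrows i),
    Matrix.rank_transpose]
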